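/- For any value functions V1, V2 on a finite state space S, the operator T− defined by (T− V)(s) = V(s) + E_{a,s'}[min(δ(s,a,s'), 0)], where δ(s,a,s') = r(s,a,s') + γ V(s') − V(s) and 0 ≤ γ < 1, is a non-expansion in the sup-norm: ‖T− V1 − T− V2‖_∞ ≤ ‖V1 − V2‖_∞. -/
import Mathlib


open Finset

/-- The operator `T₋` defined by
`(T₋ V)(s) = V(s) + E_{a,s'}[min(δ(s,a,s'), 0)]` is a non-expansion in the sup-norm. -/
theorem Tminus_nonexpansion {S A : Type*} [Fintype S] [Nonempty S] [Fintype A] [Nonempty A]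
    (pol : S → A → ℝ) (P : S → A → S → ℝ) (R : S → A → S → ℝ) (γ : ℝ)
    (hpol0 : ∀ s a, 0 ≤ pol s a) (hpol1 : ∀ s, ∑ a, pol s a = 1)
    (hP0 : ∀ s a s', 0 ≤ P s a s') (hP1 : ∀ s a, ∑ s', P s a s' = 1)
    (hγ0 : 0 ≤ γ) (hγ1 : γ < 1)
    (Tm : (S → ℝ) → (S → ℝ))
    (hTm : ∀ V s, Tm V s =
      V s + ∑ a, ∑ s', pol s a * P s a s' * min (R s a s' + γ * V s' - V s) 0)
    (V1 V2 : S → ℝ) :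
    ‖Tm V1 - Tm V2‖ ≤ ‖V1 - V2‖ := by
  set N := ‖V1 - V2‖ with hNdef
  have hNs : ∀ t, |V1 t - V2 t| ≤ N := fun t => by
    simpa [Real.norm_eq_abs] using norm_le_pi_norm (V1 - V2) t
  rw [pi_norm_le_iff_of_nonneg (norm_nonneg _)]
  intro s
  rw [Pi.sub_apply, Real.norm_eq_abs]
  have hw1 : ∑ a, ∑ s', pol s a * P s a s' = 1 := by
    simp [← Finset.mul_sum, hP1, hpol1 s]
  -- rewrite Tm V s as a convex combination of mins
  have hrw : ∀ V : S → ℝ, Tm V s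
      = ∑ a, ∑ s', pol s a * P s a s' * min (R s a s' + γ * V s') (V s) := by
    intro V
    have hVs : V s = ∑ a, ∑ s', pol s a * P s a s' * V s := by
      have h1 : ∑ a, ∑ s', pol s a * P s a s' * V s
          = (∑ a, ∑ s', pol s a * P s a s') * V s := by
        simp_rw [Finset.sum_mul]
      rw [h1, hw1, one_mul]
    rw [hTm]
    calc V s + ∑ a, ∑ s', pol s a * P s a s' * min (R s a s' + γ * V s' - V s) 0
        = ∑ a, ∑ s', (pol s a * P s a s' * V s
            + pol s a * P s a s' * min (R s a s' + γ * V s' - V s) 0) := by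
          simp_rw [Finset.sum_add_distrib]
          rw [← hVs]
      _ = ∑ a, ∑ s', pol s a * P s a s' * min (R s a s' + γ * V s') (V s) := by
          refine Finset.sum_congr rfl fun a _ => Finset.sum_congr rfl fun s' _ => ?_
          rw [← mul_add]
          congr 1
          rcases le_total (R s a s' + γ * V s') (V s) with h | h
          · rw [min_eq_left (sub_nonpos.mpr h), min_eq_left h]; ring
          · rw [min_eq_right (sub_nonneg.mpr h), min_eq_right h]; ring
  rw [hrw V1, hrw V2, ← Finset.sum_sub_distrib]
  simp_rw [← Finset.sum_sub_distrib, ← mul_sub]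
  calc |∑ a, ∑ s', pol s a * P s a s' *
        (min (R s a s' + γ * V1 s') (V1 s) - min (R s a s' + γ * V2 s') (V2 s))|
      ≤ ∑ a, ∑ s', |pol s a * P s a s' *
        (min (R s a s' + γ * V1 s') (V1 s) - min (R s a s' + γ * V2 s') (V2 s))| := by
        exact (Finset.abs_sum_le_sum_abs _ _).trans (Finset.sum_le_sum fun a _ =>
          Finset.abs_sum_le_sum_abs _ _)
    _ ≤ ∑ a, ∑ s', pol s a * P s a s' * N := by
        refine Finset.sum_le_sum fun a _ => Finset.sum_le_sum fun s' _ => ?_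
        rw [abs_mul, abs_of_nonneg (mul_nonneg (hpol0 s a) (hP0 s a s'))]
        refine mul_le_mul_of_nonneg_left ?_ (mul_nonneg (hpol0 s a) (hP0 s a s'))
        refine (abs_min_sub_min_le_max _ _ _ _).trans (max_le ?_ (hNs s))
        have : R s a s' + γ * V1 s' - (R s a s' + γ * V2 s') = γ * (V1 s' - V2 s') := by ring
        rw [this, abs_mul, abs_of_nonneg hγ0]
        calc γ * |V1 s' - V2 s'| ≤ 1 * |V1 s' - V2 s'| :=
              mul_le_mul_of_nonneg_right hγ1.le (abs_nonneg _)
          _ = |V1 s' - V2 s'| := one_mul _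
          _ ≤ N := hNs s'
    _ = N := by
        have h1 : ∑ a, ∑ s', pol s a * P s a s' * N
            = (∑ a, ∑ s', pol s a * P s a s') * N := by simp_rw [Finset.sum_mul]
        rw [h1, hw1, one_mul]
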